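/- Let H be a complex Hilbert space, P0 an orthogonal projection, f0 a unit vector with P0 f0 = f0, and let K be the vertical space at (P0,f0), i.e. the set of anti-Hermitian B ∈ B(H) with B P0 = P0 B and B f0 = 0. If X0 ∈ B(H) is anti-Hermitian and ‖X0 + B‖ ≥ ‖X0‖ for all B ∈ K, then ‖X0² + B X0 + X0 B‖ ≥ ‖X0‖² for all B ∈ K. -/

import Mathlib

open ContinuousLinearMap

/-- If `X0` is anti-Hermitian and `‖X0 + B‖ ≥ ‖X0‖` for every `B` in the
vertical space at `(P0, f0)` (anti-Hermitian, commuting with `P0`, killing `f0`), then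
`‖X0² + B X0 + X0 B‖ ≥ ‖X0‖²` for all such `B`. -/
theorem minimal_lifting_square_norm
    {H : Type*} [NormedAddCommGroup H] [InnerProductSpace ℂ H] [CompleteSpace H]
    (P0 : H →L[ℂ] H) (hP0sa : IsSelfAdjoint P0) (hP0idem : P0 * P0 = P0)
    (f0 : H) (hf0 : ‖f0‖ = 1) (hf0fix : P0 f0 = f0)
    (X0 : H →L[ℂ] H) (hX0 : adjoint X0 = -X0)
    (hmin : ∀ B : H →L[ℂ] H, adjoint B = -B → B * P0 = P0 * B → B f0 = 0 →
      ‖X0‖ ≤ ‖X0 + B‖) :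
    ∀ B : H →L[ℂ] H, adjoint B = -B → B * P0 = P0 * B → B f0 = 0 →
      ‖X0‖ ^ 2 ≤ ‖X0 * X0 + B * X0 + X0 * B‖ := by
  intro B hB hBP hBf
  -- for anti-Hermitian X, ‖X*X‖ = ‖X‖^2
  have hsq : ∀ X : H →L[ℂ] H, adjoint X = -X → ‖X * X‖ = ‖X‖ ^ 2 := by
    intro X hX
    have h := ContinuousLinearMap.norm_adjoint_comp_self X
    rw [hX] at h
    have h2 : (-X) ∘L X = -(X * X) := by
      ext x; simp [ContinuousLinearMap.mul_apply]
    rw [h2, norm_neg] at h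
    rw [h]; ring
  set Y := X0 * X0 + B * X0 + X0 * B with hY
  have key : ∀ t : ℝ, 0 < t → t ≤ 1 → ‖X0‖ ^ 2 ≤ ‖Y‖ + t * ‖B * B‖ := by
    intro t ht ht1
    set C : H →L[ℂ] H := (t : ℂ) • B with hC
    have hCadj : adjoint C = -C := by
      rw [hC, ← ContinuousLinearMap.star_eq_adjoint, star_smul,
        ContinuousLinearMap.star_eq_adjoint, hB]
      simp
    have hCP : C * P0 = P0 * C := by
      rw [hC, smul_mul_assoc, hBP, mul_smul_comm]
    have hCf : C f0 = 0 := by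
      rw [hC]; simp [hBf]
    have h1 : ‖X0‖ ≤ ‖X0 + C‖ := hmin C hCadj hCP hCf
    have hXC : adjoint (X0 + C) = -(X0 + C) := by
      rw [← ContinuousLinearMap.star_eq_adjoint, star_add,
        ContinuousLinearMap.star_eq_adjoint, ContinuousLinearMap.star_eq_adjoint,
        hX0, hCadj]
      abel
    have h2 : ‖X0‖ ^ 2 ≤ ‖(X0 + C) * (X0 + C)‖ := by
      rw [hsq _ hXC]
      have := norm_nonneg X0
      nlinarith
    have expand : (X0 + C) * (X0 + C)
        = (1 - (t : ℂ)) • (X0 * X0) + (t : ℂ) • Y + ((t : ℂ) * (t : ℂ)) • (B * B) := by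
      rw [hC, hY]
      simp only [mul_add, add_mul, smul_mul_assoc, mul_smul_comm, smul_smul, smul_add]
      module
    have h3 : ‖(X0 + C) * (X0 + C)‖
        ≤ (1 - t) * ‖X0 * X0‖ + t * ‖Y‖ + (t * t) * ‖B * B‖ := by
      rw [expand]
      have e1 : ‖(1 - (t : ℂ))‖ = 1 - t := by
        rw [show (1 - (t : ℂ)) = ((1 - t : ℝ) : ℂ) by push_cast; ring]
        rw [Complex.norm_real, Real.norm_of_nonneg (by linarith)]
      have e2 : ‖(t : ℂ)‖ = t := by
        rw [Complex.norm_real, Real.norm_of_nonneg ht.le]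
      calc ‖(1 - (t : ℂ)) • (X0 * X0) + (t : ℂ) • Y + ((t : ℂ) * (t : ℂ)) • (B * B)‖
          ≤ ‖(1 - (t : ℂ)) • (X0 * X0) + (t : ℂ) • Y‖ + ‖((t : ℂ) * (t : ℂ)) • (B * B)‖ :=
            norm_add_le _ _
        _ ≤ ‖(1 - (t : ℂ)) • (X0 * X0)‖ + ‖(t : ℂ) • Y‖ + ‖((t : ℂ) * (t : ℂ)) • (B * B)‖ := by
            have := norm_add_le ((1 - (t : ℂ)) • (X0 * X0)) ((t : ℂ) • Y)
            linarith
        _ = (1 - t) * ‖X0 * X0‖ + t * ‖Y‖ + (t * t) * ‖B * B‖ := by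
            rw [norm_smul, norm_smul, norm_smul, norm_mul (t : ℂ) (t : ℂ), e1, e2]
    have h4 : ‖X0 * X0‖ = ‖X0‖ ^ 2 := hsq X0 hX0
    rw [h4] at h3
    nlinarith [norm_nonneg (B * B), norm_nonneg Y]
  -- conclude by letting t → 0
  refine le_of_forall_pos_le_add ?_
  intro ε hε
  set t := min 1 (ε / (‖B * B‖ + 1)) with htdef
  have hBB : (0:ℝ) < ‖B * B‖ + 1 := by positivity
  have ht0 : 0 < t := lt_min one_pos (div_pos hε hBB)
  have ht1 : t ≤ 1 := min_le_left _ _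
  have h := key t ht0 ht1
  have htε : t * ‖B * B‖ ≤ ε := by
    have h1 : t ≤ ε / (‖B * B‖ + 1) := min_le_right _ _
    have h2 : t * ‖B * B‖ ≤ (ε / (‖B * B‖ + 1)) * (‖B * B‖ + 1) := by
      have := norm_nonneg (B * B)
      nlinarith
    rw [div_mul_cancel₀ _ hBB.ne'] at h2
    exact h2
  linarith
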